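/- arXiv:1909.06062 — 3 statements merged into one kernel-verified Lean document; each statement's English description precedes it below -/
import Mathlib

section
/- The Mordell–Tornheim value ζ_MT(1,1,1) = Σ_{m,n≥1} 1/(mn(m+n)) equals 2ζ(3), where ζ is the Riemann zeta function. -/
open Filter Finset Topology

noncomputable def zetaMT (a b c : ℕ) : ℝ :=
  ∑' p : ℕ+ × ℕ+, 1 / ((p.1 : ℝ) ^ a * (p.2 : ℝ) ^ b * ((p.1 : ℝ) + (p.2 : ℝ)) ^ c)

namespace MTaux

/-- `aa n = 1/(n+1)` -/
noncomputable def aa (n : ℕ) : ℝ := 1 / ((n : ℝ) + 1)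

/-- harmonic number `H k = ∑_{j<k} 1/(j+1)` -/
noncomputable def H (k : ℕ) : ℝ := ∑ j ∈ Finset.range k, aa j

lemma aa_pos (n : ℕ) : 0 < aa n := by
  unfold aa; positivity

lemma tendsto_aa : Tendsto aa atTop (𝓝 0) :=
  tendsto_one_div_add_atTop_nhds_zero_nat

lemma tendsto_aa_add (j : ℕ) : Tendsto (fun N => aa (N + j)) atTop (𝓝 0) :=
  tendsto_aa.comp (tendsto_atTop_atTop_of_monotone (fun _ _ h => by omega)
    (fun b => ⟨b, by omega⟩))

/-- the telescoping sum -/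
lemma hasSum_telescope (m : ℕ) :
    HasSum (fun n => aa n - aa (n + (m + 1))) (H (m + 1)) := by
  have hnn : ∀ n, 0 ≤ aa n - aa (n + (m + 1)) := by
    intro n
    have h : aa (n + (m + 1)) ≤ aa n := by
      unfold aa
      apply one_div_le_one_div_of_le
      · positivity
      · push_cast; linarith
    linarith
  rw [hasSum_iff_tendsto_nat_of_nonneg hnn]
  have key : ∀ N, ∑ n ∈ range N, (aa n - aa (n + (m + 1)))
      = H (m + 1) - ∑ j ∈ range (m + 1), aa (N + j) := by
    intro N
    have h1 : ∑ x ∈ range (N + (m + 1)), aa x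
        = ∑ x ∈ range N, aa x + ∑ x ∈ range (m + 1), aa (N + x) :=
      Finset.sum_range_add aa N (m + 1)
    have h2 : ∑ x ∈ range ((m + 1) + N), aa x
        = ∑ x ∈ range (m + 1), aa x + ∑ x ∈ range N, aa ((m + 1) + x) :=
      Finset.sum_range_add aa (m + 1) N
    have h3 : ∑ n ∈ range N, aa (n + (m + 1)) = ∑ x ∈ range N, aa ((m + 1) + x) := by
      apply Finset.sum_congr rfl; intro x _; rw [Nat.add_comm]
    rw [Finset.sum_sub_distrib, h3]
    have h4 : (m + 1) + N = N + (m + 1) := by omega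
    rw [h4] at h2
    unfold H
    linarith [h1, h2]
  simp only [key]
  have : Tendsto (fun N => ∑ j ∈ range (m + 1), aa (N + j)) atTop (𝓝 0) := by
    have := tendsto_finset_sum (range (m + 1))
      (fun j _ => tendsto_aa_add j)
    simpa using this
  simpa using (tendsto_const_nhds (x := H (m + 1))).sub this

/-- the main double-sum term -/
noncomputable def F (p : ℕ × ℕ) : ℝ :=
  1 / (((p.1 : ℝ) + 1) * ((p.2 : ℝ) + 1) * ((p.1 : ℝ) + (p.2 : ℝ) + 2))

/-- half term -/
noncomputable def G (p : ℕ × ℕ) : ℝ :=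
  1 / (((p.2 : ℝ) + 1) * ((p.1 : ℝ) + (p.2 : ℝ) + 2) ^ 2)

lemma F_nonneg (p : ℕ × ℕ) : 0 ≤ F p := by unfold F; positivity

lemma G_nonneg (p : ℕ × ℕ) : 0 ≤ G p := by unfold G; positivity

/-- rpow comparison majorant -/
noncomputable def r (n : ℕ) : ℝ := ((n : ℝ) + 1) ^ (-(3/2) : ℝ)

lemma summable_r : Summable r := by
  have h : Summable (fun n : ℕ => ((n : ℝ)) ^ (-(3/2) : ℝ)) :=
    Real.summable_nat_rpow.2 (by norm_num)
  have := (summable_nat_add_iff 1).2 h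
  apply this.congr
  intro n
  unfold r
  push_cast
  ring_nf

lemma summable_rr : Summable (fun p : ℕ × ℕ => r p.1 * r p.2) :=
  Summable.mul_of_nonneg summable_r summable_r
    (fun n => by unfold r; positivity) (fun n => by unfold r; positivity)

lemma F_le (p : ℕ × ℕ) : F p ≤ r p.1 * r p.2 := by
  obtain ⟨m, n⟩ := p
  set x : ℝ := (m : ℝ) + 1 with hx
  set y : ℝ := (n : ℝ) + 1 with hy
  have hx0 : (0:ℝ) < x := by positivity
  have hy0 : (0:ℝ) < y := by positivity
  have hxy : (0:ℝ) < x * y := by positivity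
  have hrr : r m * r n = 1 / ((x * y) ^ ((3/2) : ℝ)) := by
    unfold r
    rw [Real.mul_rpow hx0.le hy0.le, ← hx, ← hy,
      Real.rpow_neg hx0.le, Real.rpow_neg hy0.le]
    field_simp
  rw [hrr]
  unfold F
  simp only
  have key : (x * y) ^ ((3/2) : ℝ) ≤ x * y * ((m : ℝ) + (n : ℝ) + 2) := by
    have h32 : ((3/2) : ℝ) = 1 + 1/2 := by norm_num
    rw [h32, Real.rpow_add hxy, Real.rpow_one, ← Real.sqrt_eq_rpow]
    have hs : Real.sqrt (x * y) ≤ (m : ℝ) + (n : ℝ) + 2 := by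
      have h1 : x * y ≤ ((m : ℝ) + (n : ℝ) + 2) ^ 2 := by nlinarith
      calc Real.sqrt (x * y) ≤ Real.sqrt (((m : ℝ) + (n : ℝ) + 2) ^ 2) :=
            Real.sqrt_le_sqrt h1
        _ = (m : ℝ) + (n : ℝ) + 2 := Real.sqrt_sq (by positivity)
    nlinarith [Real.sqrt_nonneg (x * y)]
  have hpos : (0:ℝ) < (x * y) ^ ((3/2) : ℝ) := Real.rpow_pos_of_pos hxy _
  apply one_div_le_one_div_of_le hpos
  calc (x * y) ^ ((3/2) : ℝ) ≤ x * y * ((m : ℝ) + (n : ℝ) + 2) := key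
    _ = x * y * ((m : ℝ) + (n : ℝ) + 2) := rfl

lemma summable_F : Summable F :=
  Summable.of_nonneg_of_le F_nonneg F_le summable_rr

lemma G_le_F (p : ℕ × ℕ) : G p ≤ F p := by
  obtain ⟨m, n⟩ := p
  unfold F G
  simp only
  apply one_div_le_one_div_of_le
  · positivity
  · have h1 : ((m:ℝ) + 1) ≤ (m:ℝ) + (n:ℝ) + 2 := by
      have := Nat.cast_nonneg (α := ℝ) n; linarith
    have h2 : (0:ℝ) ≤ ((n:ℝ) + 1) * ((m:ℝ) + (n:ℝ) + 2) := by positivity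
    nlinarith [mul_le_mul_of_nonneg_right h1 h2]

lemma summable_G : Summable G :=
  Summable.of_nonneg_of_le G_nonneg G_le_F summable_F

lemma summable_G_swap : Summable (fun p : ℕ × ℕ => G p.swap) :=
  (Equiv.prodComm ℕ ℕ).summable_iff.2 summable_G

lemma F_eq_G_add (p : ℕ × ℕ) : F p = G p + G p.swap := by
  obtain ⟨m, n⟩ := p
  unfold F G
  simp only [Prod.swap]
  have hm : (0:ℝ) < (m:ℝ) + 1 := by positivity
  have hn : (0:ℝ) < (n:ℝ) + 1 := by positivity
  have hmn : (0:ℝ) < (m:ℝ) + (n:ℝ) + 2 := by positivity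
  field_simp
  ring

/-- row sums of F -/
lemma hasSum_F_row (m : ℕ) :
    HasSum (fun n => F (m, n)) (H (m + 1) / ((m : ℝ) + 1) ^ 2) := by
  have h := (hasSum_telescope m).mul_left (1 / ((m : ℝ) + 1) ^ 2)
  have heq : (fun n => 1 / ((m : ℝ) + 1) ^ 2 * (aa n - aa (n + (m + 1))))
      = fun n => F (m, n) := by
    funext n
    unfold aa F
    simp only
    have hm : ((m:ℝ) + 1) ≠ 0 := by positivity
    have hn : ((n:ℝ) + 1) ≠ 0 := by positivity
    have hnm : ((n:ℝ) + ((m:ℝ) + 1) + 1) ≠ 0 := by positivity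
    have hmn : ((m:ℝ) + (n:ℝ) + 2) ≠ 0 := by positivity
    push_cast
    field_simp
    ring
  rw [heq, mul_comm, ← div_eq_mul_one_div] at h
  exact h

lemma S_eq : ∑' p : ℕ × ℕ, F p = ∑' m : ℕ, H (m + 1) / ((m : ℝ) + 1) ^ 2 := by
  rw [Summable.tsum_prod' summable_F (fun m => (hasSum_F_row m).summable)]
  congr 1
  funext m
  exact (hasSum_F_row m).tsum_eq

/-- the reindexed version of G -/
noncomputable def W (p : ℕ × ℕ) : ℝ :=
  if p.2 < p.1 then 1 / (((p.2 : ℝ) + 1) * ((p.1 : ℝ) + 1) ^ 2) else 0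

def iota (p : ℕ × ℕ) : ℕ × ℕ := (p.1 + p.2 + 1, p.2)

lemma iota_inj : Function.Injective iota := by
  rintro ⟨a, b⟩ ⟨c, d⟩ h
  simp only [iota, Prod.mk.injEq] at h ⊢
  omega

lemma W_comp_iota (p : ℕ × ℕ) : W (iota p) = G p := by
  obtain ⟨m, n⟩ := p
  unfold W iota G
  simp only
  rw [if_pos (by omega)]
  push_cast
  ring_nf

lemma W_support : Function.support W ⊆ Set.range iota := by
  intro ⟨k, n⟩ h
  unfold W at h
  simp only [Function.mem_support] at h
  by_cases hlt : n < k
  · exact ⟨(k - n - 1, n), by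
      unfold iota; simp only [Prod.mk.injEq]; exact ⟨by omega, trivial⟩⟩
  · exact absurd (by rw [if_neg hlt]) h

lemma summable_W : Summable W := by
  rw [← Function.Injective.summable_iff iota_inj
    (fun x hx => Function.notMem_support.1 (fun hs => hx (W_support hs)))]
  exact summable_G.congr (fun p => (W_comp_iota p).symm)

lemma tsum_W_eq_tsum_G : ∑' p : ℕ × ℕ, W p = ∑' p : ℕ × ℕ, G p := by
  rw [← Function.Injective.tsum_eq iota_inj W_support]
  exact tsum_congr (fun p => W_comp_iota p)

lemma W_row (k : ℕ) : ∑' n : ℕ, W (k, n) = H k / ((k : ℝ) + 1) ^ 2 := by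
  rw [tsum_eq_sum (s := Finset.range k)
    (fun n hn => by unfold W; simp only; rw [if_neg (by simp at hn; omega)])]
  unfold W H aa
  rw [Finset.sum_congr rfl (fun n hn => by
    simp only; rw [if_pos (by simp at hn; omega)])]
  rw [eq_div_iff (by positivity), Finset.sum_mul]
  apply Finset.sum_congr rfl
  intro n _
  have h1 : ((n:ℝ) + 1) ≠ 0 := by positivity
  have h2 : ((k:ℝ) + 1) ≠ 0 := by positivity
  field_simp

lemma T_eq : ∑' p : ℕ × ℕ, G p = ∑' k : ℕ, H k / ((k : ℝ) + 1) ^ 2 := by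
  rw [← tsum_W_eq_tsum_G,
    Summable.tsum_prod' summable_W (fun k => (summable_prod_of_nonneg
      (fun p => by unfold W; dsimp only; split <;> positivity)).1 summable_W |>.1 k)]
  exact tsum_congr (fun k => W_row k)

lemma summable_T_term : Summable (fun k : ℕ => H k / ((k : ℝ) + 1) ^ 2) := by
  have h := ((summable_prod_of_nonneg
    (f := W) (fun p => by unfold W; dsimp only; split <;> positivity)).1 summable_W).2
  exact h.congr (fun k => W_row k)

lemma summable_D : Summable (fun k : ℕ => 1 / ((k : ℝ) + 1) ^ 3) := by
  have h : Summable (fun n : ℕ => 1 / ((n : ℝ)) ^ 3) :=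
    Real.summable_one_div_nat_pow.2 (by norm_num)
  have := (summable_nat_add_iff 1).2 h
  apply this.congr
  intro n
  push_cast
  ring_nf

lemma S_split : ∑' m : ℕ, H (m + 1) / ((m : ℝ) + 1) ^ 2
    = (∑' k : ℕ, H k / ((k : ℝ) + 1) ^ 2) + ∑' k : ℕ, 1 / ((k : ℝ) + 1) ^ 3 := by
  rw [← Summable.tsum_add summable_T_term summable_D]
  apply tsum_congr
  intro m
  unfold H
  rw [Finset.sum_range_succ]
  unfold aa
  have h : ((m:ℝ) + 1) ≠ 0 := by positivity
  field_simp

lemma S_eq_two_T : ∑' p : ℕ × ℕ, F p = 2 * ∑' p : ℕ × ℕ, G p := by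
  calc ∑' p : ℕ × ℕ, F p = ∑' p : ℕ × ℕ, (G p + G p.swap) :=
        tsum_congr F_eq_G_add
    _ = (∑' p : ℕ × ℕ, G p) + ∑' p : ℕ × ℕ, G p.swap :=
        Summable.tsum_add summable_G summable_G_swap
    _ = (∑' p : ℕ × ℕ, G p) + ∑' p : ℕ × ℕ, G p := by
        congr 1
        exact (Equiv.prodComm ℕ ℕ).tsum_eq G
    _ = 2 * ∑' p : ℕ × ℕ, G p := by ring

lemma main_nat : ∑' p : ℕ × ℕ, F p = 2 * ∑' k : ℕ, 1 / ((k : ℝ) + 1) ^ 3 := by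
  have h1 := S_eq
  have h2 := S_split
  have h3 := S_eq_two_T
  have h4 := T_eq
  set S := ∑' p : ℕ × ℕ, F p
  set T := ∑' p : ℕ × ℕ, G p
  set A := ∑' k : ℕ, H k / ((k : ℝ) + 1) ^ 2
  set D := ∑' k : ℕ, 1 / ((k : ℝ) + 1) ^ 3
  -- S = A + D, S = 2T, T = A  ⟹ S = 2D
  rw [h2] at h1
  rw [h4] at h3
  linarith

end MTaux

theorem zetaMT_one_one_one : zetaMT 1 1 1 = 2 * ∑' n : ℕ+, 1 / (n : ℝ) ^ 3 := by
  unfold zetaMT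
  have hL : ∑' p : ℕ+ × ℕ+, 1 / ((p.1 : ℝ) ^ 1 * (p.2 : ℝ) ^ 1 * ((p.1 : ℝ) + (p.2 : ℝ)) ^ 1)
      = ∑' p : ℕ × ℕ, MTaux.F p := by
    rw [← Equiv.tsum_eq (Equiv.pnatEquivNat.prodCongr Equiv.pnatEquivNat).symm]
    apply tsum_congr
    intro p
    obtain ⟨m, n⟩ := p
    have hm : ((Equiv.pnatEquivNat.symm m : ℕ+) : ℝ) = (m : ℝ) + 1 := by
      simp [Equiv.pnatEquivNat]
    have hn : ((Equiv.pnatEquivNat.symm n : ℕ+) : ℝ) = (n : ℝ) + 1 := by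
      simp [Equiv.pnatEquivNat]
    simp only [Equiv.prodCongr_symm, Equiv.prodCongr_apply, Prod.map, MTaux.F, pow_one]
    rw [hm, hn]
    ring_nf
  have hR : ∑' n : ℕ+, 1 / (n : ℝ) ^ 3 = ∑' k : ℕ, 1 / ((k : ℝ) + 1) ^ 3 := by
    rw [← Equiv.tsum_eq Equiv.pnatEquivNat.symm]
    apply tsum_congr
    intro n
    have hn : ((Equiv.pnatEquivNat.symm n : ℕ+) : ℝ) = (n : ℝ) + 1 := by
      simp [Equiv.pnatEquivNat]
    rw [hn]
  rw [hL, hR, MTaux.main_nat]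
end

section
/- For positive integers h and k with k ≥ 2, the series Σ_{m,n ≥ 1} 1/(m^h (m+n)^k) converges, and more generally the r-fold Mordell–Tornheim series Σ_{m_1,…,m_r≥1} Π_j m_j^{-k_j} (m_1+⋯+m_r)^{-k_{r+1}} converges for all positive integer exponents k_1,…,k_{r+1} ≥ 1. -/
open Real

lemma summable_pnat_rpow_inv {p : ℝ} (hp : 1 < p) :
    Summable (fun n : ℕ+ => ((n : ℝ) ^ p)⁻¹) := by
  have : Summable (fun n : ℕ => ((n : ℝ) ^ p)⁻¹) := Real.summable_nat_rpow_inv.2 hp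
  exact this.comp_injective PNat.coe_injective

set_option maxHeartbeats 2000000 in
lemma summable_pi_prod : ∀ (r : ℕ) (f : Fin r → ℕ+ → ℝ), (∀ j, Summable (f j)) →
    (∀ j x, 0 ≤ f j x) → Summable (fun m : Fin r → ℕ+ => ∏ j, f j (m j)) := by
  intro r
  induction r with
  | zero => intro f _ _; simp only [Finset.univ_eq_empty, Finset.prod_empty]
            exact Summable.of_finite
  | succ n ih =>
    intro f hf hpos
    have hsum : Summable (fun p : ℕ+ × (Fin n → ℕ+) => f 0 p.1 * ∏ j : Fin n, f j.succ (p.2 j)) := by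
      apply Summable.mul_of_nonneg (hf 0)
        (ih (fun j => f j.succ) (fun j => hf j.succ) (fun j x => hpos j.succ x))
      · intro x; exact hpos 0 x
      · intro y; exact Finset.prod_nonneg fun j _ => hpos j.succ _
    have h2 : Summable ((fun m : Fin (n+1) → ℕ+ => ∏ j, f j (m j)) ∘ (Fin.consEquiv fun _ => ℕ+)) := by
      refine hsum.congr fun p => ?_
      simp [Fin.consEquiv, Fin.prod_univ_succ]
    exact (Fin.consEquiv _).summable_iff.mp h2

lemma MT_aux (r : ℕ) (hr : 0 < r) (K : Fin (r + 1) → ℕ) (hK : ∀ i, 1 ≤ K i) :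
    Summable (fun m : Fin r → ℕ+ =>
      (∏ j, (m j : ℝ) ^ (K (Fin.castSucc j)))⁻¹ * ((∑ j, (m j : ℝ)) ^ (K (Fin.last r)))⁻¹) := by
  set f : Fin r → ℕ+ → ℝ := fun j x => ((x : ℝ) ^ ((K j.castSucc : ℝ) + 1 / r))⁻¹ with hf
  have hfs : ∀ j, Summable (f j) := by
    intro j
    apply summable_pnat_rpow_inv
    have h1 : (1:ℝ) ≤ (K j.castSucc : ℝ) := by exact_mod_cast hK _
    have h2 : (0:ℝ) < 1 / r := by positivity
    linarith
  have hfpos : ∀ j x, 0 ≤ f j x := by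
    intro j x
    have : (0:ℝ) < (x:ℝ) := by exact_mod_cast x.pos
    positivity
  apply Summable.of_nonneg_of_le _ _ (summable_pi_prod r f hfs hfpos)
  · intro m
    have h1 : ∀ j, (0:ℝ) < (m j : ℝ) := fun j => by exact_mod_cast (m j).pos
    have h2 : (0:ℝ) < ∑ j, (m j : ℝ) := Finset.sum_pos (fun j _ => h1 j)
      (Finset.univ_nonempty_iff.2 ⟨⟨0, hr⟩⟩)
    positivity
  · intro m
    set S := ∑ j, (m j : ℝ) with hS
    have hmpos : ∀ j, (0:ℝ) < m j := fun j => by exact_mod_cast (m j).pos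
    have hm1 : ∀ j, (1:ℝ) ≤ m j := fun j => by exact_mod_cast (m j).one_le
    have hjS : ∀ j, (m j : ℝ) ≤ S := fun j =>
      Finset.single_le_sum (fun i _ => (hmpos i).le) (Finset.mem_univ j)
    have hS1 : (1:ℝ) ≤ S := le_trans (hm1 ⟨0, hr⟩) (hjS ⟨0, hr⟩)
    have hS0 : (0:ℝ) < S := zero_lt_one.trans_le hS1
    have key : ∏ j, ((m j : ℝ) ^ (1/(r:ℝ))) ≤ S ^ (K (Fin.last r)) := by
      calc ∏ j, ((m j:ℝ) ^ (1/(r:ℝ))) ≤ ∏ _j : Fin r, S ^ (1/(r:ℝ)) :=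
            Finset.prod_le_prod (fun j _ => Real.rpow_nonneg (hmpos j).le _)
              (fun j _ => Real.rpow_le_rpow (hmpos j).le (hjS j) (by positivity))
        _ = (S ^ (1/(r:ℝ))) ^ (r:ℕ) := by simp
        _ = S ^ ((1/(r:ℝ)) * r) := by
            rw [← Real.rpow_natCast (S ^ (1/(r:ℝ))) r, ← Real.rpow_mul hS0.le]
        _ = S := by
            rw [one_div_mul_cancel (by exact_mod_cast hr.ne' : (r:ℝ) ≠ 0), Real.rpow_one]
        _ ≤ S ^ (K (Fin.last r)) := le_self_pow₀ hS1 (Nat.one_le_iff_ne_zero.mp (hK _))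
    have hprodpos : (0:ℝ) < ∏ j, ((m j : ℝ) ^ (1/(r:ℝ))) :=
      Finset.prod_pos fun j _ => Real.rpow_pos_of_pos (hmpos j) _
    have hinv : ((S : ℝ) ^ (K (Fin.last r)))⁻¹ ≤ (∏ j, ((m j : ℝ) ^ (1/(r:ℝ))))⁻¹ :=
      inv_anti₀ hprodpos key
    calc (∏ j, (m j : ℝ) ^ (K (Fin.castSucc j)))⁻¹ * (S ^ (K (Fin.last r)))⁻¹
        ≤ (∏ j, (m j : ℝ) ^ (K (Fin.castSucc j)))⁻¹ * (∏ j, ((m j : ℝ) ^ (1/(r:ℝ))))⁻¹ := by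
          apply mul_le_mul_of_nonneg_left hinv
          have : (0:ℝ) < ∏ j, (m j : ℝ) ^ (K (Fin.castSucc j)) :=
            Finset.prod_pos fun j _ => pow_pos (hmpos j) _
          positivity
      _ = ∏ j, f j (m j) := by
          simp only [hf]
          rw [← Finset.prod_inv_distrib, ← Finset.prod_inv_distrib, ← Finset.prod_mul_distrib]
          refine Finset.prod_congr rfl fun j _ => ?_
          rw [Real.rpow_add (hmpos j), Real.rpow_natCast, mul_inv]

theorem MT_series_summable (h k : ℕ) (hh : 0 < h) (hk : 2 ≤ k) (r : ℕ) (hr : 0 < r)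
    (K : Fin (r + 1) → ℕ) (hK : ∀ i, 1 ≤ K i) :
    Summable (fun p : ℕ+ × ℕ+ => ((p.1 : ℝ) ^ h * ((p.1 : ℝ) + (p.2 : ℝ)) ^ k)⁻¹) ∧
    Summable (fun m : Fin r → ℕ+ =>
      (∏ j, (m j : ℝ) ^ (K (Fin.castSucc j)))⁻¹ * ((∑ j, (m j : ℝ)) ^ (K (Fin.last r)))⁻¹) := by
  refine ⟨?_, MT_aux r hr K hK⟩
  have hK' : ∀ i : Fin 3, 1 ≤ (![h, 1, k - 1] : Fin 3 → ℕ) i := by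
    intro i
    fin_cases i <;> simp <;> omega
  have H := MT_aux 2 two_pos ![h, 1, k - 1] hK'
  have H2 : Summable (fun p : ℕ+ × ℕ+ =>
      ((p.1 : ℝ) ^ h * (p.2 : ℝ)) ⁻¹ * (((p.1 : ℝ) + (p.2 : ℝ)) ^ (k - 1))⁻¹) := by
    have H3 := H.comp_injective (finTwoArrowEquiv ℕ+).symm.injective
    refine H3.congr fun p => ?_
    simp [finTwoArrowEquiv, Fin.prod_univ_two, Fin.sum_univ_two, Fin.last]
  apply Summable.of_nonneg_of_le _ _ H2
  · intro p
    have h1 : (0:ℝ) < (p.1 : ℝ) := by exact_mod_cast p.1.pos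
    have h2 : (0:ℝ) < (p.2 : ℝ) := by exact_mod_cast p.2.pos
    positivity
  · intro p
    have h1 : (0:ℝ) < (p.1 : ℝ) := by exact_mod_cast p.1.pos
    have h2 : (0:ℝ) < (p.2 : ℝ) := by exact_mod_cast p.2.pos
    rw [← mul_inv]
    apply inv_anti₀ (by positivity)
    have hkk : (((p.1:ℝ) + p.2) ^ k) = ((p.1:ℝ) + p.2) ^ (k - 1) * ((p.1:ℝ) + p.2) := by
      rw [← pow_succ]
      congr 1
      omega
    rw [hkk]
    have : (p.2 : ℝ) ≤ (p.1 : ℝ) + p.2 := by linarith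
    calc (p.1:ℝ) ^ h * p.2 * ((p.1:ℝ) + p.2) ^ (k-1)
        ≤ (p.1:ℝ) ^ h * ((p.1:ℝ) + p.2) * ((p.1:ℝ) + p.2) ^ (k-1) := by
          apply mul_le_mul_of_nonneg_right _ (by positivity)
          exact mul_le_mul_of_nonneg_left this (by positivity)
      _ = (p.1:ℝ) ^ h * (((p.1:ℝ) + p.2) ^ (k-1) * ((p.1:ℝ) + p.2)) := by ring
end

section
/- The Euler–Zagier double zeta value satisfies ζ_EZ(1,2) = ζ(3), i.e., Σ_{n=1}^∞ Σ_{m=1}^∞ 1/(n(n+m)^2) = Σ_{n=1}^∞ 1/n^3. -/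
open Finset Filter Topology

/-! Auxiliary development for Euler's identity ζ(1,2) = ζ(3). -/

/-- harmonic number H_k = Σ_{i<k} 1/(i+1) -/
noncomputable def Hh (k : ℕ) : ℝ := ∑ i ∈ Finset.range k, 1 / ((i : ℝ) + 1)

/-- the summand of the double zeta value, ℕ-indexed -/
noncomputable def Fa (n m : ℕ) : ℝ := 1 / (((n : ℝ) + 1) * ((n : ℝ) + (m : ℝ) + 2) ^ 2)

/-- symmetric auxiliary summand -/
noncomputable def Ga (n m : ℕ) : ℝ :=
  1 / (((n : ℝ) + 1) * (((m : ℝ) + 1) * ((n : ℝ) + (m : ℝ) + 2)))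

lemma rpow_aux {a b : ℝ} (ha : 1 ≤ a) (hb : 1 ≤ b) :
    a ^ ((3 : ℝ) / 2) * b ^ ((3 : ℝ) / 2) ≤ a * (a + b) ^ 2 := by
  have ha0 : (0 : ℝ) < a := lt_of_lt_of_le one_pos ha
  have hb0 : (0 : ℝ) < b := lt_of_lt_of_le one_pos hb
  have hs0 : (0 : ℝ) < a + b := by linarith
  have h1 : a ^ ((3 : ℝ) / 2) = a * a ^ ((1 : ℝ) / 2) := by
    rw [show (3 : ℝ) / 2 = 1 + 1 / 2 by norm_num, Real.rpow_add ha0, Real.rpow_one]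
  have h2 : a ^ ((1 : ℝ) / 2) ≤ (a + b) ^ ((1 : ℝ) / 2) :=
    Real.rpow_le_rpow ha0.le (by linarith) (by norm_num)
  have h3 : b ^ ((3 : ℝ) / 2) ≤ (a + b) ^ ((3 : ℝ) / 2) :=
    Real.rpow_le_rpow hb0.le (by linarith) (by norm_num)
  have h4 : (a + b) ^ ((1 : ℝ) / 2) * (a + b) ^ ((3 : ℝ) / 2) = (a + b) ^ 2 := by
    rw [← Real.rpow_add hs0, show (1 : ℝ) / 2 + 3 / 2 = ((2 : ℕ) : ℝ) by norm_num,
      Real.rpow_natCast]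
  calc a ^ ((3 : ℝ) / 2) * b ^ ((3 : ℝ) / 2)
      = a * (a ^ ((1 : ℝ) / 2) * b ^ ((3 : ℝ) / 2)) := by rw [h1]; ring
    _ ≤ a * ((a + b) ^ ((1 : ℝ) / 2) * (a + b) ^ ((3 : ℝ) / 2)) := by
        apply mul_le_mul_of_nonneg_left _ ha0.le
        exact mul_le_mul h2 h3 (Real.rpow_nonneg hb0.le _) (Real.rpow_nonneg hs0.le _)
    _ = a * (a + b) ^ 2 := by rw [h4]

lemma rpow_aux2 {a b : ℝ} (ha : 1 ≤ a) (hb : 1 ≤ b) :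
    a ^ ((3 : ℝ) / 2) * b ^ ((3 : ℝ) / 2) ≤ a * (b * (a + b)) := by
  have ha0 : (0 : ℝ) < a := lt_of_lt_of_le one_pos ha
  have hb0 : (0 : ℝ) < b := lt_of_lt_of_le one_pos hb
  have hs0 : (0 : ℝ) < a + b := by linarith
  have h1 : a ^ ((3 : ℝ) / 2) = a * a ^ ((1 : ℝ) / 2) := by
    rw [show (3 : ℝ) / 2 = 1 + 1 / 2 by norm_num, Real.rpow_add ha0, Real.rpow_one]
  have h1b : b ^ ((3 : ℝ) / 2) = b * b ^ ((1 : ℝ) / 2) := by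
    rw [show (3 : ℝ) / 2 = 1 + 1 / 2 by norm_num, Real.rpow_add hb0, Real.rpow_one]
  have h2 : a ^ ((1 : ℝ) / 2) ≤ (a + b) ^ ((1 : ℝ) / 2) :=
    Real.rpow_le_rpow ha0.le (by linarith) (by norm_num)
  have h3 : b ^ ((1 : ℝ) / 2) ≤ (a + b) ^ ((1 : ℝ) / 2) :=
    Real.rpow_le_rpow hb0.le (by linarith) (by norm_num)
  have h4 : (a + b) ^ ((1 : ℝ) / 2) * (a + b) ^ ((1 : ℝ) / 2) = a + b := by
    rw [← Real.rpow_add hs0]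
    norm_num
  calc a ^ ((3 : ℝ) / 2) * b ^ ((3 : ℝ) / 2)
      = (a * b) * (a ^ ((1 : ℝ) / 2) * b ^ ((1 : ℝ) / 2)) := by rw [h1, h1b]; ring
    _ ≤ (a * b) * ((a + b) ^ ((1 : ℝ) / 2) * (a + b) ^ ((1 : ℝ) / 2)) := by
        apply mul_le_mul_of_nonneg_left _ (by positivity)
        exact mul_le_mul h2 h3 (Real.rpow_nonneg hb0.le _) (Real.rpow_nonneg hs0.le _)
    _ = a * (b * (a + b)) := by rw [h4]; ring

/-- the dominating summable function on ℕ -/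
lemma summable_b : Summable (fun n : ℕ => 1 / ((n : ℝ) + 1) ^ ((3 : ℝ) / 2)) := by
  have h : Summable (fun n : ℕ => 1 / (n : ℝ) ^ ((3 : ℝ) / 2)) :=
    Real.summable_one_div_nat_rpow.mpr (by norm_num)
  have := (summable_nat_add_iff 1).mpr h
  refine this.congr fun n => ?_
  push_cast
  rfl

lemma summable_bb :
    Summable (fun p : ℕ × ℕ =>
      (1 / ((p.1 : ℝ) + 1) ^ ((3 : ℝ) / 2)) * (1 / ((p.2 : ℝ) + 1) ^ ((3 : ℝ) / 2))) := by
  apply Summable.mul_of_nonneg summable_b summable_b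
  · intro n; positivity
  · intro n; positivity

lemma summable_Fa : Summable (fun p : ℕ × ℕ => Fa p.1 p.2) := by
  refine Summable.of_nonneg_of_le (fun p => by unfold Fa; positivity) (fun p => ?_) summable_bb
  obtain ⟨n, m⟩ := p
  have ha : (1 : ℝ) ≤ (n : ℝ) + 1 := le_add_of_nonneg_left (by positivity)
  have hb : (1 : ℝ) ≤ (m : ℝ) + 1 := le_add_of_nonneg_left (by positivity)
  have key := rpow_aux ha hb
  unfold Fa
  rw [div_mul_div_comm, one_mul]
  apply one_div_le_one_div_of_le (by positivity)
  calc ((n : ℝ) + 1) ^ ((3 : ℝ) / 2) * ((m : ℝ) + 1) ^ ((3 : ℝ) / 2)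
      ≤ ((n : ℝ) + 1) * (((n : ℝ) + 1) + ((m : ℝ) + 1)) ^ 2 := key
    _ = ((n : ℝ) + 1) * ((n : ℝ) + (m : ℝ) + 2) ^ 2 := by ring

lemma summable_Ga : Summable (fun p : ℕ × ℕ => Ga p.1 p.2) := by
  refine Summable.of_nonneg_of_le (fun p => by unfold Ga; positivity) (fun p => ?_) summable_bb
  obtain ⟨n, m⟩ := p
  have ha : (1 : ℝ) ≤ (n : ℝ) + 1 := le_add_of_nonneg_left (by positivity)
  have hb : (1 : ℝ) ≤ (m : ℝ) + 1 := le_add_of_nonneg_left (by positivity)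
  have key := rpow_aux2 ha hb
  unfold Ga
  rw [div_mul_div_comm, one_mul]
  apply one_div_le_one_div_of_le (by positivity)
  calc ((n : ℝ) + 1) ^ ((3 : ℝ) / 2) * ((m : ℝ) + 1) ^ ((3 : ℝ) / 2)
      ≤ ((n : ℝ) + 1) * (((m : ℝ) + 1) * (((n : ℝ) + 1) + ((m : ℝ) + 1))) := key
    _ = ((n : ℝ) + 1) * (((m : ℝ) + 1) * ((n : ℝ) + (m : ℝ) + 2)) := by ring

/-- shifted finite sums -/
lemma sum_range_shift (g : ℕ → ℝ) (k : ℕ) :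
    ∀ N : ℕ, ∑ m ∈ Finset.range N, g (m + k) =
      ∑ i ∈ Finset.range (N + k), g i - ∑ i ∈ Finset.range k, g i := by
  intro N
  induction N with
  | zero => simp
  | succ N ih =>
    rw [Finset.sum_range_succ, ih, Nat.succ_add, Finset.sum_range_succ]
    ring

/-- the telescoping sum -/
lemma telescope (d : ℕ) :
    HasSum (fun m : ℕ => 1 / ((m : ℝ) + 1) - 1 / ((m : ℝ) + (d : ℝ) + 2)) (Hh (d + 1)) := by
  set g : ℕ → ℝ := fun i => 1 / ((i : ℝ) + 1) with hg
  have hnn : ∀ m : ℕ, 0 ≤ 1 / ((m : ℝ) + 1) - 1 / ((m : ℝ) + (d : ℝ) + 2) := by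
    intro m
    have : 1 / ((m : ℝ) + (d : ℝ) + 2) ≤ 1 / ((m : ℝ) + 1) := by
      apply one_div_le_one_div_of_le (by positivity)
      push_cast; linarith [Nat.cast_nonneg (α := ℝ) d]
    linarith
  rw [hasSum_iff_tendsto_nat_of_nonneg hnn]
  have hps : ∀ N : ℕ, ∑ m ∈ Finset.range N, (1 / ((m : ℝ) + 1) - 1 / ((m : ℝ) + (d : ℝ) + 2)) =
      Hh (d + 1) - (∑ i ∈ Finset.range (N + (d + 1)), g i - ∑ i ∈ Finset.range N, g i) := by
    intro N
    rw [Finset.sum_sub_distrib]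
    have h1 : ∑ m ∈ Finset.range N, 1 / ((m : ℝ) + (d : ℝ) + 2) =
        ∑ m ∈ Finset.range N, g (m + (d + 1)) := by
      apply Finset.sum_congr rfl
      intro m _
      simp only [hg]
      push_cast
      ring_nf
    rw [h1, sum_range_shift g (d + 1) N]
    unfold Hh
    simp only [hg]
    ring
  have hlim : Tendsto (fun N : ℕ => ∑ i ∈ Finset.range (N + (d + 1)), g i -
      ∑ i ∈ Finset.range N, g i) atTop (𝓝 0) := by
    have hb : ∀ N : ℕ, ∑ i ∈ Finset.range (N + (d + 1)), g i - ∑ i ∈ Finset.range N, g i ≤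
        ((d : ℝ) + 1) * (1 / ((N : ℝ) + 1)) := by
      intro N
      have : ∑ i ∈ Finset.range (N + (d + 1)), g i - ∑ i ∈ Finset.range N, g i =
          ∑ i ∈ Finset.Ico N (N + (d + 1)), g i := by
        rw [Finset.sum_Ico_eq_sub _ (Nat.le_add_right N (d + 1))]
      rw [this]
      have hcard : (Finset.Ico N (N + (d + 1))).card = d + 1 := by
        rw [Nat.card_Ico]; omega
      calc ∑ i ∈ Finset.Ico N (N + (d + 1)), g i
          ≤ ∑ _i ∈ Finset.Ico N (N + (d + 1)), (1 / ((N : ℝ) + 1)) := by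
            apply Finset.sum_le_sum
            intro i hi
            simp only [Finset.mem_Ico] at hi
            simp only [hg]
            apply one_div_le_one_div_of_le (by positivity)
            have := hi.1
            push_cast
            exact_mod_cast Nat.add_le_add_right this 1
        _ = ((d : ℝ) + 1) * (1 / ((N : ℝ) + 1)) := by
            rw [Finset.sum_const, hcard]
            push_cast
            ring
    have hnn2 : ∀ N : ℕ, 0 ≤ ∑ i ∈ Finset.range (N + (d + 1)), g i -
        ∑ i ∈ Finset.range N, g i := by
      intro N
      rw [← Finset.sum_Ico_eq_sub _ (Nat.le_add_right N (d + 1))]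
      apply Finset.sum_nonneg
      intro i _
      simp only [hg]
      positivity
    have hz : Tendsto (fun N : ℕ => ((d : ℝ) + 1) * (1 / ((N : ℝ) + 1))) atTop (𝓝 0) := by
      have := tendsto_one_div_add_atTop_nhds_zero_nat.const_mul ((d : ℝ) + 1)
      simpa using this
    exact squeeze_zero hnn2 hb hz
  have : Tendsto (fun N : ℕ => Hh (d + 1) - (∑ i ∈ Finset.range (N + (d + 1)), g i -
      ∑ i ∈ Finset.range N, g i)) atTop (𝓝 (Hh (d + 1))) := by
    simpa using tendsto_const_nhds.sub hlim
  exact this.congr fun N => (hps N).symm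

lemma hasSum_Ga (n : ℕ) :
    HasSum (fun m : ℕ => Ga n m) (Hh (n + 1) * (1 / ((n : ℝ) + 1) ^ 2)) := by
  have h := (telescope n).mul_left (1 / ((n : ℝ) + 1) ^ 2)
  have he : (fun m : ℕ => Ga n m) = fun m : ℕ =>
      (1 / ((n : ℝ) + 1) ^ 2) * (1 / ((m : ℝ) + 1) - 1 / ((m : ℝ) + (n : ℝ) + 2)) := by
    funext m
    unfold Ga
    have h1 : ((n : ℝ) + 1) ≠ 0 := by positivity
    have h2 : ((m : ℝ) + 1) ≠ 0 := by positivity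
    have h3 : ((m : ℝ) + (n : ℝ) + 2) ≠ 0 := by positivity
    field_simp
    ring
  rw [he]
  simpa [mul_comm] using h

lemma summable_A : Summable (fun n : ℕ => Hh (n + 1) * (1 / ((n : ℝ) + 1) ^ 2)) := by
  have h := summable_Ga.prod
  exact h.congr fun n => (hasSum_Ga n).tsum_eq

lemma S_eq : ∑' p : ℕ × ℕ, Ga p.1 p.2 =
    ∑' n : ℕ, Hh (n + 1) * (1 / ((n : ℝ) + 1) ^ 2) := by
  rw [Summable.tsum_prod summable_Ga]
  exact tsum_congr fun n => (hasSum_Ga n).tsum_eq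

/-- reindexing of pairs by their "antidiagonal" -/
def eSig' : (Σ k : ℕ, Fin (k + 1)) ≃ ℕ × ℕ where
  toFun x := (x.2.1, x.1 - x.2.1)
  invFun p := ⟨p.1 + p.2, ⟨p.1, by omega⟩⟩
  left_inv := by
    rintro ⟨k, ⟨i, hi⟩⟩
    dsimp only
    have h : i + (k - i) = k := by omega
    refine Sigma.ext h ?_
    rw [Fin.heq_ext_iff (by show i + (k - i) + 1 = k + 1; omega)]
  right_inv := by
    rintro ⟨n, m⟩
    simp

lemma summable_Fa_sig :
    Summable (fun x : Σ k : ℕ, Fin (k + 1) => Fa (eSig' x).1 (eSig' x).2) :=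
  (Equiv.summable_iff eSig').mpr summable_Fa

lemma fin_sum (k : ℕ) :
    (∑ i : Fin (k + 1), Fa i.1 (k - i.1)) = Hh (k + 1) * (1 / ((k : ℝ) + 2) ^ 2) := by
  rw [Fin.sum_univ_eq_sum_range (fun j => Fa j (k - j))]
  have hcongr : ∀ i ∈ Finset.range (k + 1),
      Fa i (k - i) = (1 / ((i : ℝ) + 1)) * (1 / ((k : ℝ) + 2) ^ 2) := by
    intro i hi
    simp only [Finset.mem_range] at hi
    have hik : i ≤ k := by omega
    unfold Fa
    rw [Nat.cast_sub hik]
    have hs : (i : ℝ) + ((k : ℝ) - (i : ℝ)) + 2 = (k : ℝ) + 2 := by ring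
    rw [hs, div_mul_div_comm, one_mul]
  rw [Finset.sum_congr rfl hcongr, ← Finset.sum_mul]
  rfl

lemma summable_B : Summable (fun k : ℕ => Hh (k + 1) * (1 / ((k : ℝ) + 2) ^ 2)) := by
  have h := summable_Fa_sig.sigma
  refine h.congr fun k => ?_
  rw [tsum_fintype]
  exact fin_sum k

lemma L_eq : ∑' p : ℕ × ℕ, Fa p.1 p.2 =
    ∑' k : ℕ, Hh (k + 1) * (1 / ((k : ℝ) + 2) ^ 2) := by
  rw [← Equiv.tsum_eq eSig' (fun p : ℕ × ℕ => Fa p.1 p.2)]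
  rw [Summable.tsum_sigma summable_Fa_sig]
  refine tsum_congr fun k => ?_
  rw [tsum_fintype]
  exact fin_sum k

lemma two_L : (∑' p : ℕ × ℕ, Fa p.1 p.2) + (∑' p : ℕ × ℕ, Fa p.1 p.2) =
    ∑' p : ℕ × ℕ, Ga p.1 p.2 := by
  have hswap : Summable (fun p : ℕ × ℕ => Fa p.2 p.1) := summable_Fa.prod_symm
  have hGa : ∀ p : ℕ × ℕ, Ga p.1 p.2 = Fa p.1 p.2 + Fa p.2 p.1 := by
    rintro ⟨a, b⟩
    unfold Fa Ga
    have h1 : ((a : ℝ) + 1) ≠ 0 := by positivity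
    have h2 : ((b : ℝ) + 1) ≠ 0 := by positivity
    have h3 : ((a : ℝ) + (b : ℝ) + 2) ≠ 0 := by positivity
    have h4 : ((b : ℝ) + (a : ℝ) + 2) ≠ 0 := by positivity
    field_simp
    ring
  rw [tsum_congr hGa, Summable.tsum_add summable_Fa hswap]
  congr 1
  rw [← Equiv.tsum_eq (Equiv.prodComm ℕ ℕ) (fun p : ℕ × ℕ => Fa p.1 p.2)]
  rfl

lemma summable_z3 : Summable (fun n : ℕ => 1 / ((n : ℝ) + 1) ^ 3) := by
  have h : Summable (fun n : ℕ => 1 / (n : ℝ) ^ 3) :=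
    Real.summable_one_div_nat_pow.mpr (by norm_num)
  have := (summable_nat_add_iff 1).mpr h
  refine this.congr fun n => ?_
  push_cast
  rfl

lemma summable_z3' : Summable (fun k : ℕ => 1 / ((k : ℝ) + 2) ^ 3) := by
  have h : Summable (fun n : ℕ => 1 / (n : ℝ) ^ 3) :=
    Real.summable_one_div_nat_pow.mpr (by norm_num)
  have := (summable_nat_add_iff 2).mpr h
  refine this.congr fun n => ?_
  push_cast
  rfl

lemma zeta_nat : ∑' p : ℕ × ℕ, Fa p.1 p.2 = ∑' n : ℕ, 1 / ((n : ℝ) + 1) ^ 3 := by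
  have hkey : ∀ k : ℕ, Hh (k + 1 + 1) * (1 / (((k : ℕ) + 1 : ℝ) + 1) ^ 2) =
      Hh (k + 1) * (1 / ((k : ℝ) + 2) ^ 2) + 1 / ((k : ℝ) + 2) ^ 3 := by
    intro k
    have hH : Hh (k + 1 + 1) = Hh (k + 1) + 1 / ((k : ℝ) + 2) := by
      unfold Hh
      rw [Finset.sum_range_succ]
      congr 1
      push_cast
      ring
    rw [hH]
    have h2 : ((k : ℝ) + 2) ≠ 0 := by positivity
    field_simp
    ring
  have hS2 : (∑' p : ℕ × ℕ, Fa p.1 p.2) + (∑' p : ℕ × ℕ, Fa p.1 p.2) =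
      ∑' n : ℕ, Hh (n + 1) * (1 / ((n : ℝ) + 1) ^ 2) := by
    rw [two_L, S_eq]
  have hsplit : ∑' n : ℕ, Hh (n + 1) * (1 / ((n : ℝ) + 1) ^ 2) =
      1 + ((∑' k : ℕ, Hh (k + 1) * (1 / ((k : ℝ) + 2) ^ 2)) +
        ∑' k : ℕ, 1 / ((k : ℝ) + 2) ^ 3) := by
    rw [Summable.tsum_eq_zero_add summable_A]
    congr 1
    · simp [Hh]
    · rw [← Summable.tsum_add summable_B summable_z3']
      refine tsum_congr fun k => ?_
      push_cast
      exact hkey k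
  have hz : ∑' n : ℕ, 1 / ((n : ℝ) + 1) ^ 3 = 1 + ∑' k : ℕ, 1 / ((k : ℝ) + 2) ^ 3 := by
    rw [Summable.tsum_eq_zero_add summable_z3]
    congr 1
    · norm_num
    · refine tsum_congr fun k => ?_
      push_cast
      ring_nf
  rw [← L_eq] at hsplit
  rw [hsplit] at hS2
  rw [hz]
  linarith [hS2]

lemma pnat_cast_succPNat (n : ℕ) : ((n.succPNat : ℕ+) : ℝ) = (n : ℝ) + 1 := by
  have : ((n.succPNat : ℕ+) : ℕ) = n + 1 := Nat.succPNat_coe n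
  exact_mod_cast congrArg (Nat.cast : ℕ → ℝ) this

/-- the equivalence between ℕ × ℕ and ℕ+ × ℕ+ -/
def eP : ℕ × ℕ ≃ ℕ+ × ℕ+ :=
  Equiv.prodCongr Equiv.pnatEquivNat.symm Equiv.pnatEquivNat.symm

theorem zetaEZ_one_two :
    ∑' p : ℕ+ × ℕ+, 1 / ((p.1 : ℝ) * ((p.1 : ℝ) + (p.2 : ℝ)) ^ 2) =
      ∑' n : ℕ+, 1 / (n : ℝ) ^ 3 := by
  rw [← Equiv.tsum_eq eP (fun p : ℕ+ × ℕ+ => 1 / ((p.1 : ℝ) * ((p.1 : ℝ) + (p.2 : ℝ)) ^ 2)),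
    ← Equiv.tsum_eq Equiv.pnatEquivNat.symm (fun n : ℕ+ => 1 / (n : ℝ) ^ 3)]
  have h1 : ∀ q : ℕ × ℕ,
      (1 : ℝ) / (((eP q).1 : ℝ) * (((eP q).1 : ℝ) + ((eP q).2 : ℝ)) ^ 2) = Fa q.1 q.2 := by
    rintro ⟨n, m⟩
    have he : eP (n, m) = (n.succPNat, m.succPNat) := rfl
    rw [he]
    unfold Fa
    simp only [pnat_cast_succPNat]
    ring_nf
  have h2 : ∀ n : ℕ, (1 : ℝ) / ((Equiv.pnatEquivNat.symm n : ℕ+) : ℝ) ^ 3 =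
      1 / ((n : ℝ) + 1) ^ 3 := by
    intro n
    have he : Equiv.pnatEquivNat.symm n = n.succPNat := rfl
    rw [he, pnat_cast_succPNat]
  rw [tsum_congr h1, tsum_congr h2]
  exact zeta_nat
end
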